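/- Let R be a commutative ring in which 2 = 0, and let W be the Weierstraß curve over R with coefficients a₁, a₂, a₃, a₄, a₆. Then a₁ = 0 and a₃ = 0 if and only if there exist a commutative R-algebra R' which is faithfully flat as an R-module and a change of variables (u, r, s, t) over R' (with u a unit) transforming the base change of W to R' into the Weierstraß curve y² = x³ with all five coefficients equal to 0. -/

import Mathlib

universe u
open Polynomial

section sqext
variable {A : Type u} [CommRing A] (c : A)

lemma monic_sq : (X ^ 2 - C c : A[X]).Monic := monic_X_pow_sub_C c two_ne_zero

noncomputable instance sqext_free : Module.Free A (AdjoinRoot (X ^ 2 - C c)) :=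
  Module.Free.of_basis (AdjoinRoot.powerBasis' (monic_sq c)).basis

lemma sqext_nontrivial [Nontrivial A] : Nontrivial (AdjoinRoot (X ^ 2 - C c)) := by
  refine ⟨1, 0, fun h => ?_⟩
  have := AdjoinRoot.mk_ne_zero_of_degree_lt (monic_sq c) (g := 1) one_ne_zero ?_
  · exact this (by simpa using h)
  · rw [degree_one, degree_X_pow_sub_C (by norm_num)]; norm_num

lemma sqext_root_sq : (AdjoinRoot.root (X ^ 2 - C c)) ^ 2 = algebraMap A _ c := by
  have := AdjoinRoot.eval₂_root (X ^ 2 - C c)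
  simp only [eval₂_sub, eval₂_pow, eval₂_X, eval₂_C, sub_eq_zero] at this
  rw [this, AdjoinRoot.algebraMap_eq]

lemma sqext_ff [Nontrivial A] : Module.FaithfullyFlat A (AdjoinRoot (X ^ 2 - C c)) :=
  haveI := sqext_nontrivial c
  inferInstance
end sqext

section constr
variable {R : Type u} [CommRing R] (W : WeierstrassCurve R)

noncomputable abbrev WA : Type u := AdjoinRoot (X ^ 2 - C W.a₄)
noncomputable abbrev Wr : WA W := AdjoinRoot.root _
noncomputable abbrev WB : Type u :=
  AdjoinRoot (X ^ 2 - C (algebraMap R (WA W) W.a₂ + Wr W))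
noncomputable abbrev Ws : WB W := AdjoinRoot.root _
noncomputable abbrev We : WA W :=
  algebraMap R (WA W) W.a₆ + Wr W * algebraMap R (WA W) W.a₄
    + (Wr W) ^ 2 * algebraMap R (WA W) W.a₂ + (Wr W) ^ 3
noncomputable abbrev WT : Type u :=
  AdjoinRoot (X ^ 2 - C (algebraMap (WA W) (WB W) (We W)))
noncomputable abbrev Wt : WT W := AdjoinRoot.root _

lemma hrsq : (algebraMap (WA W) (WT W) (Wr W)) ^ 2 = algebraMap R (WT W) W.a₄ := by
  rw [← map_pow, sqext_root_sq, ← IsScalarTower.algebraMap_apply]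

set_option maxHeartbeats 2000000 in
lemma hssq : (algebraMap (WB W) (WT W) (Ws W)) ^ 2
    = algebraMap R (WT W) W.a₂ + algebraMap (WA W) (WT W) (Wr W) := by
  rw [← map_pow, sqext_root_sq, ← IsScalarTower.algebraMap_apply, map_add,
    ← IsScalarTower.algebraMap_apply]

set_option maxHeartbeats 2000000 in
lemma htsq : (Wt W) ^ 2 = algebraMap R (WT W) W.a₆
    + algebraMap (WA W) (WT W) (Wr W) * algebraMap R (WT W) W.a₄
    + (algebraMap (WA W) (WT W) (Wr W)) ^ 2 * algebraMap R (WT W) W.a₂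
    + (algebraMap (WA W) (WT W) (Wr W)) ^ 3 := by
  rw [sqext_root_sq, ← IsScalarTower.algebraMap_apply]
  simp only [map_add, map_mul, map_pow, ← IsScalarTower.algebraMap_apply]

lemma ffT [Nontrivial R] : Module.FaithfullyFlat R (WT W) :=
  haveI : Nontrivial (WA W) := sqext_nontrivial _
  haveI : Nontrivial (WB W) := sqext_nontrivial _
  haveI f1 : Module.FaithfullyFlat R (WA W) := sqext_ff _
  haveI f2 : Module.FaithfullyFlat (WA W) (WB W) := sqext_ff _
  haveI f3 : Module.FaithfullyFlat (WB W) (WT W) := sqext_ff _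
  haveI f4 : Module.FaithfullyFlat (WA W) (WT W) :=
    Module.FaithfullyFlat.trans (WA W) (WB W) (WT W)
  Module.FaithfullyFlat.trans R (WA W) (WT W)
end constr

lemma ff_inj {R R' : Type u} [CommRing R] [CommRing R'] [Algebra R R']
    [Module.FaithfullyFlat R R'] {a : R} (h : algebraMap R R' a = 0) : a = 0 := by
  have h0 : LinearMap.lTensor R' (LinearMap.toSpanSingleton R R a) = 0 := by
    apply TensorProduct.ext'
    intro m x
    simp only [LinearMap.lTensor_tmul, LinearMap.zero_apply, LinearMap.toSpanSingleton_apply,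
      smul_eq_mul]
    have : m ⊗ₜ[R] (x * a) = (x * a) • (m ⊗ₜ[R] (1 : R)) := by
      conv_lhs => rw [show x * a = (x * a) • (1 : R) by rw [smul_eq_mul, mul_one]]
      exact TensorProduct.tmul_smul _ _ _
    rw [this, TensorProduct.smul_tmul', Algebra.smul_def, map_mul, h, mul_zero, zero_mul,
      TensorProduct.zero_tmul]
  have := (Module.FaithfullyFlat.zero_iff_lTensor_zero R R'
    (LinearMap.toSpanSingleton R R a)).mpr h0
  simpa using congrFun (congrArg DFunLike.coe this) 1

set_option maxHeartbeats 2000000 in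
theorem stmt1 {R : Type u} [CommRing R] (h2 : (2 : R) = 0) (W : WeierstrassCurve R) :
    (W.a₁ = 0 ∧ W.a₃ = 0) ↔
      ∃ (R' : Type u) (_ : CommRing R') (_ : Algebra R R')
        (_ : Module.FaithfullyFlat R R') (C : WeierstrassCurve.VariableChange R'),
        C • W.baseChange R' =
          ({ a₁ := 0, a₂ := 0, a₃ := 0, a₄ := 0, a₆ := 0 } : WeierstrassCurve R') := by
  constructor
  · rintro ⟨h1, h3⟩
    rcases subsingleton_or_nontrivial R with hR | hR
    · exact ⟨R, ‹_›, Algebra.id R, inferInstance, ⟨1, 0, 0, 0⟩, by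
        ext <;> exact Subsingleton.elim _ _⟩
    · refine ⟨WT W, inferInstance, inferInstance, ffT W,
        ⟨1, algebraMap (WA W) (WT W) (Wr W), algebraMap (WB W) (WT W) (Ws W), Wt W⟩, ?_⟩
      have hr := hrsq W
      have hs := hssq W
      have ht := htsq W
      set T := WT W
      set rT := algebraMap (WA W) T (Wr W)
      set sT := algebraMap (WB W) T (Ws W)
      set t := Wt W
      have h2T : (2 : T) = 0 := by
        rw [← map_ofNat (algebraMap R T) 2, h2, map_zero]
      have ha₁ : algebraMap R T W.a₁ = 0 := by rw [h1, map_zero]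
      have ha₃ : algebraMap R T W.a₃ = 0 := by rw [h3, map_zero]
      ext <;> simp only [WeierstrassCurve.variableChange_a₁, WeierstrassCurve.variableChange_a₂,
        WeierstrassCurve.variableChange_a₃, WeierstrassCurve.variableChange_a₄,
        WeierstrassCurve.variableChange_a₆, WeierstrassCurve.map_a₁, WeierstrassCurve.map_a₂,
        WeierstrassCurve.map_a₃, WeierstrassCurve.map_a₄, WeierstrassCurve.map_a₆,
        WeierstrassCurve.baseChange, inv_one, Units.val_one, one_pow, one_mul]
      · linear_combination ha₁ + sT * h2T
      · linear_combination (-1 : T) * hs + (-sT) * ha₁ + rT * h2T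
      · linear_combination ha₃ + rT * ha₁ + t * h2T
      · linear_combination (3 : T) * hr
          + (2 * algebraMap R T W.a₄ + rT * algebraMap R T W.a₂ - sT * t) * h2T
          + (-sT) * ha₃ + (-(t + rT * sT)) * ha₁
      · linear_combination (-1 : T) * ht + (-t) * ha₃ + (-(rT * t)) * ha₁
  · rintro ⟨R', _, _, _, C, hC⟩
    have h2' : (2 : R') = 0 := by rw [← map_ofNat (algebraMap R R') 2, h2, map_zero]
    have e1 := congrArg WeierstrassCurve.a₁ hC
    have e3 := congrArg WeierstrassCurve.a₃ hC
    simp only [WeierstrassCurve.variableChange_a₁, WeierstrassCurve.variableChange_a₃,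
      WeierstrassCurve.map_a₁, WeierstrassCurve.map_a₃, WeierstrassCurve.baseChange] at e1 e3
    have z1 : algebraMap R R' W.a₁ + 2 * C.s = 0 := by
      have := congrArg (fun z => (C.u : R') * z) e1
      simpa [Units.mul_inv_cancel_left] using this
    have ha1 : algebraMap R R' W.a₁ = 0 := by
      rw [h2', zero_mul, add_zero] at z1; exact z1
    have z3 : algebraMap R R' W.a₃ + C.r * algebraMap R R' W.a₁ + 2 * C.t = 0 := by
      have := congrArg (fun z => ((C.u : R') ^ 3) * z) e3
      simp only [mul_zero] at this
      rw [← mul_assoc, ← mul_pow, Units.mul_inv, one_pow, one_mul] at this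
      exact this
    refine ⟨ff_inj (R' := R') ha1, ff_inj (R' := R') ?_⟩
    rw [ha1, mul_zero, add_zero, h2', zero_mul, add_zero] at z3
    exact z3
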